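/- Let X have the half-normal distribution with parameter σ² > 0 (i.e. X = |Z|, Z ∼ N(0, σ²)). Then for every Lipschitz function f : [0,∞) → ℝ, E[X²] E[f'(X)] = E[X (f(X) - f(0))], where E[X²] = σ². -/

import Mathlib

open MeasureTheory Real

section HalfNormalAux

open Filter Set
open scoped ENNReal NNReal

private lemma hn_tendsto_mul_exp_sq {b : ℝ} (hb : 0 < b) :
    Tendsto (fun x : ℝ => x * Real.exp (-b * x ^ 2)) atTop (nhds 0) := by
  have h := rpow_mul_exp_neg_mul_sq_isLittleO_exp_neg hb 1
  have h2 : Tendsto (fun x : ℝ => Real.exp (-(1/2) * x)) atTop (nhds 0) := by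
    apply Real.tendsto_exp_comp_nhds_zero.mpr
    exact (tendsto_id (α := ℝ)).const_mul_atTop_of_neg (by norm_num)
  have := h.trans_tendsto h2
  refine this.congr' ?_
  filter_upwards with x using by rw [Real.rpow_one]

private lemma hn_gauss_tail {b : ℝ} (hb : 0 < b) (s : ℝ) :
    ∫ t in Ioi s, t * Real.exp (-b * t ^ 2) = Real.exp (-b * s ^ 2) / (2 * b) := by
  have hderiv : ∀ x ∈ Ici s, HasDerivAt (fun t : ℝ => -Real.exp (-b * t ^ 2) / (2 * b))
      (x * Real.exp (-b * x ^ 2)) x := by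
    intro x _
    have h1 : HasDerivAt (fun t : ℝ => -b * t ^ 2) (-b * (2 * x)) x := by
      simpa using ((hasDerivAt_pow 2 x).const_mul (-b))
    have h2 := (h1.exp).neg.div_const (2 * b)
    refine h2.congr_deriv ?_
    rw [div_eq_iff (by positivity)]
    ring
  have hint : IntegrableOn (fun t : ℝ => t * Real.exp (-b * t ^ 2)) (Ioi s) :=
    (integrable_mul_exp_neg_mul_sq hb).integrableOn
  have htend : Tendsto (fun t : ℝ => -Real.exp (-b * t ^ 2) / (2 * b)) atTop (nhds 0) := by
    have : Tendsto (fun t : ℝ => Real.exp (-b * t ^ 2)) atTop (nhds 0) := by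
      apply Real.tendsto_exp_comp_nhds_zero.mpr
      apply Tendsto.const_mul_atTop_of_neg (by linarith)
      exact tendsto_pow_atTop two_ne_zero
    simpa using (this.neg.div_const (2 * b))
  have := integral_Ioi_of_hasDerivAt_of_tendsto' hderiv hint htend
  rw [this]; field_simp
  ring

private lemma hn_intOn_sq_exp {b : ℝ} (hb : 0 < b) :
    IntegrableOn (fun t : ℝ => t ^ 2 * Real.exp (-b * t ^ 2)) (Ioi 0) := by
  have := integrableOn_rpow_mul_exp_neg_mul_sq hb (s := 2) (by norm_num)
  refine this.congr_fun (fun x hx => ?_) measurableSet_Ioi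
  beta_reduce
  rw [show ((2:ℝ)) = ((2:ℕ):ℝ) by norm_num, Real.rpow_natCast]

private lemma hn_gauss_sq {b : ℝ} (hb : 0 < b) :
    ∫ t in Ioi (0:ℝ), t ^ 2 * Real.exp (-b * t ^ 2)
      = (1 / (2 * b)) * ∫ t in Ioi (0:ℝ), Real.exp (-b * t ^ 2) := by
  have hexp : IntegrableOn (fun t : ℝ => Real.exp (-b * t ^ 2)) (Ioi 0) :=
    (integrable_exp_neg_mul_sq hb).integrableOn
  have hsq := hn_intOn_sq_exp hb
  have hderiv : ∀ x ∈ Ici (0:ℝ), HasDerivAt (fun t : ℝ => -t * Real.exp (-b * t ^ 2) / (2 * b))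
      (x ^ 2 * Real.exp (-b * x ^ 2) - Real.exp (-b * x ^ 2) / (2 * b)) x := by
    intro x _
    have h1 : HasDerivAt (fun t : ℝ => -b * t ^ 2) (-b * (2 * x)) x := by
      simpa using ((hasDerivAt_pow 2 x).const_mul (-b))
    have h2 : HasDerivAt (fun t : ℝ => -t * Real.exp (-b * t ^ 2))
        (-1 * Real.exp (-b * x ^ 2) + (-x) * (Real.exp (-b * x ^ 2) * (-b * (2 * x)))) x :=
      ((hasDerivAt_id x).neg).mul h1.exp
    have h3 := h2.div_const (2 * b)
    refine h3.congr_deriv ?_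
    rw [div_eq_iff (by positivity), sub_mul, div_mul_cancel₀ _ (by positivity)]
    ring
  have hint : IntegrableOn
      (fun x : ℝ => x ^ 2 * Real.exp (-b * x ^ 2) - Real.exp (-b * x ^ 2) / (2 * b))
      (Ioi 0) := hsq.sub (hexp.div_const _)
  have htend : Tendsto (fun t : ℝ => -t * Real.exp (-b * t ^ 2) / (2 * b)) atTop (nhds 0) := by
    have := (hn_tendsto_mul_exp_sq hb).neg.div_const (2 * b)
    simpa [neg_mul] using this
  have h0 := integral_Ioi_of_hasDerivAt_of_tendsto' hderiv hint htend
  simp only [neg_zero, zero_mul, mul_zero, zero_div, sub_zero, zero_pow] at h0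
  have h0' : (∫ t in Ioi (0:ℝ), t ^ 2 * Real.exp (-b * t ^ 2))
      - ∫ t in Ioi (0:ℝ), Real.exp (-b * t ^ 2) / (2 * b) = 0 := by
    rw [← integral_sub hsq (hexp.div_const _)]
    simpa using h0
  have : ∫ t in Ioi (0:ℝ), Real.exp (-b * t ^ 2) / (2 * b)
      = (1 / (2 * b)) * ∫ t in Ioi (0:ℝ), Real.exp (-b * t ^ 2) := by
    rw [← integral_const_mul]
    congr 1; ext t; ring
  linarith [h0', this]

private lemma hn_lipschitz_ftc {K : NNReal} {f : ℝ → ℝ} (hf : LipschitzWith K f) {x : ℝ}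
    (hx : 0 ≤ x) : ∫ s in Ioc 0 x, deriv f s = f x - f 0 := by
  have hcont : Continuous f := hf.continuous
  set h : ℕ → ℝ := fun n => ((n : ℝ) + 1)⁻¹ with hh
  have hhpos : ∀ n, 0 < h n := fun n => by positivity
  have hh0 : Tendsto h atTop (nhds 0) := tendsto_one_div_add_atTop_nhds_zero_nat.congr
    (fun n => by rw [hh]; simp [one_div])
  set g : ℕ → ℝ → ℝ := fun n s => (f (s + h n) - f s) / h n with hg
  have slope_lim : ∀ (F : ℝ → ℝ) (a L : ℝ), HasDerivAt F L a →
      Tendsto (fun n => (F (a + h n) - F a) / h n) atTop (nhds L) := by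
    intro F a L hF
    have hs := hasDerivAt_iff_tendsto_slope.mp hF
    have hseq : Tendsto (fun n => a + h n) atTop (nhdsWithin a {a}ᶜ) := by
      apply tendsto_nhdsWithin_of_tendsto_nhds_of_eventually_within
      · simpa using (tendsto_const_nhds (x := a)).add hh0
      · filter_upwards with n
        simp only [Set.mem_compl_iff, Set.mem_singleton_iff]
        have := (hhpos n).ne'
        intro hc; exact this (by linarith)
    have := hs.comp hseq
    refine this.congr (fun n => ?_)
    show slope F a (a + h n) = _
    rw [slope_def_field]
    field_simp
    rw [add_sub_cancel_left]
  have hae : ∀ᵐ s : ℝ, Tendsto (fun n => g n s) atTop (nhds (deriv f s)) := by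
    filter_upwards [hf.ae_differentiableAt_real] with s hs
    exact slope_lim f s (deriv f s) hs.hasDerivAt
  have hbd : ∀ n s, |g n s| ≤ (K : ℝ) := by
    intro n s
    rw [hg, abs_div, abs_of_pos (hhpos n)]
    rw [div_le_iff₀ (hhpos n)]
    have := hf.dist_le_mul (s + h n) s
    simp only [Real.dist_eq] at this
    simpa [abs_of_pos (hhpos n)] using this
  have hmeasg : ∀ n, AEStronglyMeasurable (g n) (volume.restrict (Set.Ioc 0 x)) := by
    intro n
    exact (((hcont.comp (continuous_id.add continuous_const)).sub
      hcont).div_const _).aestronglyMeasurable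
  have hDCT : Tendsto (fun n => ∫ s in Set.Ioc 0 x, g n s) atTop
      (nhds (∫ s in Set.Ioc 0 x, deriv f s)) := by
    apply tendsto_integral_of_dominated_convergence (fun _ => (K : ℝ)) hmeasg
      (integrable_const _)
    · intro n; filter_upwards with s using hbd n s
    · exact ae_restrict_of_ae hae
  have hval : ∀ n, ∫ s in Set.Ioc 0 x, g n s
      = (∫ s in x..(x + h n), f s) / h n - (∫ s in (0:ℝ)..(h n), f s) / h n := by
    intro n
    have hIi : ∀ a b : ℝ, IntervalIntegrable f volume a b := fun a b =>
      hcont.intervalIntegrable a b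
    have e1 : ∫ s in Set.Ioc 0 x, g n s = ∫ s in (0:ℝ)..x, g n s := by
      rw [intervalIntegral.integral_of_le hx]
    rw [e1, hg]
    simp only [div_eq_mul_inv, sub_mul]
    rw [intervalIntegral.integral_sub, intervalIntegral.integral_mul_const,
      intervalIntegral.integral_mul_const]
    · have e2 : ∫ s in (0:ℝ)..x, f (s + h n) = ∫ s in (h n)..(x + h n), f s := by
        simpa using intervalIntegral.integral_comp_add_right (a := (0:ℝ)) (b := x) f (h n)
      rw [e2]
      have e3 : (∫ s in (h n)..(x + h n), f s)
          = (∫ s in (h n)..x, f s) + ∫ s in x..(x + h n), f s :=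
        (intervalIntegral.integral_add_adjacent_intervals (hIi _ _) (hIi _ _)).symm
      have e4 : (∫ s in (0:ℝ)..x, f s)
          = (∫ s in (0:ℝ)..(h n), f s) + ∫ s in (h n)..x, f s :=
        (intervalIntegral.integral_add_adjacent_intervals (hIi _ _) (hIi _ _)).symm
      rw [e3, e4]
      ring
    · exact ((hcont.comp (continuous_id.add continuous_const)).intervalIntegrable 0 x).mul_const _
    · exact (hIi 0 x).mul_const _
  have hlim1 : Tendsto (fun n => (∫ s in x..(x + h n), f s) / h n) atTop (nhds (f x)) := by
    have hF : HasDerivAt (fun u => ∫ s in x..u, f s) (f x) x :=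
      intervalIntegral.integral_hasDerivAt_right (hcont.intervalIntegrable x x)
        (hcont.stronglyMeasurableAtFilter _ _) hcont.continuousAt
    have := slope_lim _ x (f x) hF
    simpa using this
  have hlim2 : Tendsto (fun n => (∫ s in (0:ℝ)..(h n), f s) / h n) atTop (nhds (f 0)) := by
    have hF : HasDerivAt (fun u => ∫ s in (0:ℝ)..u, f s) (f 0) 0 :=
      intervalIntegral.integral_hasDerivAt_right (hcont.intervalIntegrable 0 0)
        (hcont.stronglyMeasurableAtFilter _ _) hcont.continuousAt
    have := slope_lim _ 0 (f 0) hF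
    simpa using this
  have hfin : Tendsto (fun n => ∫ s in Set.Ioc 0 x, g n s) atTop (nhds (f x - f 0)) := by
    have := hlim1.sub hlim2
    exact this.congr (fun n => (hval n).symm)
  exact tendsto_nhds_unique hDCT hfin

private lemma hn_cov {Ω : Type*} [MeasurableSpace Ω] (P : Measure Ω)
    (σ2 : ℝ) (X : Ω → ℝ) (hX_meas : Measurable X)
    (hX_law : Measure.map X P = volume.withDensity (fun t => ENNReal.ofReal
      (Set.indicator (Set.Ici (0 : ℝ))
        (fun t => Real.sqrt (2 / (π * σ2)) * Real.exp (-t ^ 2 / (2 * σ2))) t)))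
    (g : ℝ → ℝ) (hg : Measurable g) :
    ∫ ω, g (X ω) ∂P
      = ∫ t in Ioi (0:ℝ), (Real.sqrt (2 / (π * σ2)) * Real.exp (-t ^ 2 / (2 * σ2))) * g t := by
  set d : ℝ → ℝ := Set.indicator (Set.Ici (0 : ℝ))
      (fun t => Real.sqrt (2 / (π * σ2)) * Real.exp (-t ^ 2 / (2 * σ2))) with hd
  have hdm : Measurable d := Measurable.indicator (by fun_prop) measurableSet_Ici
  have hd0 : ∀ t, 0 ≤ d t := by
    intro t
    rw [hd]
    apply Set.indicator_nonneg
    intro t _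
    positivity
  have h1 : ∫ ω, g (X ω) ∂P = ∫ t, g t ∂(Measure.map X P) :=
    (integral_map hX_meas.aemeasurable hg.aestronglyMeasurable).symm
  rw [h1, hX_law]
  have h2 : (fun t => ENNReal.ofReal (d t)) = fun t => ((d t).toNNReal : ℝ≥0∞) := rfl
  rw [h2, integral_withDensity_eq_integral_smul (by fun_prop) g]
  have h3 : ∀ t, ((d t).toNNReal : ℝ) • g t = Set.indicator (Set.Ici (0:ℝ))
      (fun t => (Real.sqrt (2 / (π * σ2)) * Real.exp (-t ^ 2 / (2 * σ2))) * g t) t := by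
    intro t
    have he : ((d t).toNNReal : ℝ) • g t = d t * g t := by
      rw [smul_eq_mul, Real.coe_toNNReal _ (hd0 t)]
    rw [he, hd]
    by_cases ht : t ∈ Set.Ici (0:ℝ) <;>
      simp [Set.indicator_of_mem, Set.indicator_of_notMem, ht]
  calc ∫ t, ((d t).toNNReal : ℝ) • g t
      = ∫ t, Set.indicator (Set.Ici (0:ℝ))
        (fun t => (Real.sqrt (2 / (π * σ2)) * Real.exp (-t ^ 2 / (2 * σ2))) * g t) t :=
        integral_congr_ae (Filter.Eventually.of_forall h3)
    _ = ∫ t in Set.Ici (0:ℝ), (Real.sqrt (2 / (π * σ2)) * Real.exp (-t ^ 2 / (2 * σ2))) * g t :=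
        integral_indicator measurableSet_Ici
    _ = ∫ t in Set.Ioi (0:ℝ), (Real.sqrt (2 / (π * σ2)) * Real.exp (-t ^ 2 / (2 * σ2))) * g t :=
        integral_Ici_eq_integral_Ioi

private lemma hn_lipschitz_deriv_bound {K : NNReal} {f : ℝ → ℝ} (hf : LipschitzWith K f)
    (s : ℝ) : |deriv f s| ≤ (K : ℝ) := by
  simpa using norm_deriv_le_of_lipschitz (x₀ := s) hf

private lemma hn_fubini_part {b : ℝ} (hb : 0 < b) {K : NNReal} {f : ℝ → ℝ}
    (hf : LipschitzWith K f) :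
    ∫ t in Ioi (0:ℝ), (t * Real.exp (-b * t ^ 2)) * (f t - f 0)
      = ∫ s in Ioi (0:ℝ), (Real.exp (-b * s ^ 2) / (2 * b)) * deriv f s := by
  have hftc : ∀ {x : ℝ}, 0 ≤ x → ∫ s in Ioc 0 x, deriv f s = f x - f 0 :=
    fun {x} hx => hn_lipschitz_ftc hf hx
  have htail := hn_gauss_tail hb
  set φ : ℝ → ℝ := fun t => Real.exp (-b * t ^ 2) with hφ
  set S : Set (ℝ × ℝ) := {q : ℝ × ℝ | q.2 ∈ Ioc 0 q.1} with hS
  have hSm : MeasurableSet S := by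
    have : S = {q : ℝ × ℝ | 0 < q.2} ∩ {q : ℝ × ℝ | q.2 ≤ q.1} := by
      ext q; simp [hS, Set.mem_Ioc, and_comm]
    rw [this]
    exact (measurableSet_lt measurable_const measurable_snd).inter
      (measurableSet_le measurable_snd measurable_fst)
  set H : ℝ × ℝ → ℝ := S.indicator (fun q => (q.1 * φ q.1) * deriv f q.2) with hH
  have hderiv_meas : Measurable (deriv f) := measurable_deriv f
  have hHmeas : Measurable H := by
    apply Measurable.indicator _ hSm
    exact ((measurable_fst.mul (by fun_prop)).mul (hderiv_meas.comp measurable_snd))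
  have hHsec : ∀ t s : ℝ, H (t, s) = (Ioc 0 t).indicator
      (fun s => (t * φ t) * deriv f s) s := by
    intro t s
    by_cases hs : s ∈ Ioc 0 t
    · rw [Set.indicator_of_mem hs, hH, Set.indicator_of_mem (by simpa [hS] using hs)]
    · rw [Set.indicator_of_notMem hs, hH, Set.indicator_of_notMem (by simpa [hS] using hs)]
  have hIocInt : ∀ t : ℝ, Integrable (fun s => H (t, s)) := by
    intro t
    simp only [hHsec t]
    rw [integrable_indicator_iff measurableSet_Ioc]
    apply Integrable.mono' (g := fun _ => |t * φ t| * (K : ℝ))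
      (integrable_const _)
      (((measurable_const.mul hderiv_meas).aestronglyMeasurable).restrict)
    filter_upwards with s
    have he : ‖t * φ t * deriv f s‖ = |t * φ t| * |deriv f s| := by
      rw [Real.norm_eq_abs, abs_mul]
    show ‖t * φ t * deriv f s‖ ≤ _
    rw [he]
    exact mul_le_mul_of_nonneg_left (hn_lipschitz_deriv_bound hf s) (abs_nonneg _)
  have hHint : Integrable H ((volume.restrict (Ioi (0:ℝ))).prod volume) := by
    rw [integrable_prod_iff hHmeas.aestronglyMeasurable]
    constructor
    · filter_upwards with t using hIocInt t
    · apply Integrable.mono' (g := fun t => (K : ℝ) * (t ^ 2 * φ t))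
      · exact ((hn_intOn_sq_exp hb).const_mul _)
      · exact hHmeas.aestronglyMeasurable.norm.integral_prod_right'
      · filter_upwards [ae_restrict_mem measurableSet_Ioi] with t ht
        have ht0 : (0:ℝ) < t := Set.mem_Ioi.mp ht
        have h1 : ∫ s, ‖H (t, s)‖ = ∫ s in Ioc 0 t, ‖(t * φ t) * deriv f s‖ := by
          simp only [hHsec t]
          rw [← integral_indicator measurableSet_Ioc]
          congr 1; ext s
          exact (norm_indicator_eq_indicator_norm _ _)
        rw [Real.norm_eq_abs, abs_of_nonneg (integral_nonneg (fun s => norm_nonneg _)), h1]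
        have hφt0 : (0:ℝ) ≤ t * φ t := by
          have := ht0.le; positivity
        have h2 : ∫ s in Ioc 0 t, ‖(t * φ t) * deriv f s‖
            ≤ ∫ s in Ioc 0 t, (t * φ t) * (K : ℝ) := by
          apply integral_mono_of_nonneg
          · filter_upwards with s using norm_nonneg _
          · exact integrable_const _
          · filter_upwards with s
            have he : ‖t * φ t * deriv f s‖ = |t * φ t| * |deriv f s| := by
              rw [Real.norm_eq_abs, abs_mul]
            rw [he, abs_of_nonneg hφt0]
            exact mul_le_mul_of_nonneg_left (hn_lipschitz_deriv_bound hf s) hφt0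
        refine h2.trans ?_
        rw [setIntegral_const, Real.volume_real_Ioc_of_le ht0.le]
        apply le_of_eq
        rw [sub_zero, smul_eq_mul]; ring
  have hswap : (∫ t in Ioi (0:ℝ), ∫ s, H (t, s)) = ∫ s, ∫ t in Ioi (0:ℝ), H (t, s) :=
    integral_integral_swap hHint
  have hL : (∫ t in Ioi (0:ℝ), ∫ s, H (t, s))
      = ∫ t in Ioi (0:ℝ), (t * φ t) * (f t - f 0) := by
    apply setIntegral_congr_fun measurableSet_Ioi
    intro t ht
    simp only [hHsec t]
    rw [integral_indicator measurableSet_Ioc, integral_const_mul, hftc (le_of_lt ht)]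
  have hR : (∫ s, ∫ t in Ioi (0:ℝ), H (t, s))
      = ∫ s in Ioi (0:ℝ), (φ s / (2 * b)) * deriv f s := by
    rw [← integral_indicator measurableSet_Ioi]
    congr 1; ext s
    by_cases hs : (0:ℝ) < s
    · have hsec : ∀ t : ℝ, H (t, s) = (Ici s).indicator (fun t => (t * φ t) * deriv f s) t := by
        intro t
        rw [hH]
        simp only [Set.indicator_apply, hS, Set.mem_setOf_eq, Set.mem_Ioc, Set.mem_Ici]
        by_cases hts : s ≤ t <;> simp [hts, hs]
      simp only [hsec]
      rw [setIntegral_indicator measurableSet_Ici]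
      have hinter : Ioi (0:ℝ) ∩ Ici s = Ici s :=
        Set.inter_eq_right.mpr (fun t ht => lt_of_lt_of_le hs ht)
      rw [hinter, Set.indicator_of_mem (Set.mem_Ioi.mpr hs)]
      rw [integral_mul_const, integral_Ici_eq_integral_Ioi, htail s]
    · have hzero : ∀ t : ℝ, H (t, s) = 0 := by
        intro t
        rw [hH, Set.indicator_apply]
        simp [hS, Set.mem_Ioc, hs]
      simp only [hzero, integral_zero]
      rw [Set.indicator_of_notMem (by simpa using hs)]
  rw [← hL, hswap, hR]

end HalfNormalAux

/-- If `X` has the half-normal distribution with parameter `σ² > 0` (the law of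
`|Z|`, `Z ∼ N(0, σ²)`, with density `√(2/(πσ²)) exp(-t²/(2σ²))` on `[0,∞)`),
then `E[X²] = σ²` and for every Lipschitz `f : [0,∞) → ℝ` (realized as a
Lipschitz function on `ℝ`), `E[X²] E[f'(X)] = E[X (f(X) - f(0))]`. -/
theorem stmt_19 {Ω : Type*} [MeasurableSpace Ω] (P : Measure Ω) [IsProbabilityMeasure P]
    (σ2 : ℝ) (hσ2 : 0 < σ2) (X : Ω → ℝ) (hX_meas : Measurable X)
    (hX_law : Measure.map X P = volume.withDensity (fun t => ENNReal.ofReal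
      (Set.indicator (Set.Ici (0 : ℝ))
        (fun t => Real.sqrt (2 / (π * σ2)) * Real.exp (-t ^ 2 / (2 * σ2))) t))) :
    (∫ ω, (X ω) ^ 2 ∂P = σ2) ∧
      ∀ f : ℝ → ℝ, (∃ K : NNReal, LipschitzWith K f) →
        (∫ ω, (X ω) ^ 2 ∂P) * ∫ ω, deriv f (X ω) ∂P
          = ∫ ω, X ω * (f (X ω) - f 0) ∂P := by
  have hπ : (0:ℝ) < π := pi_pos
  set b : ℝ := (2 * σ2)⁻¹ with hb
  have hbpos : 0 < b := by rw [hb]; positivity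
  set c : ℝ := Real.sqrt (2 / (π * σ2)) with hc
  have hexp_eq : ∀ t : ℝ, Real.exp (-t ^ 2 / (2 * σ2)) = Real.exp (-b * t ^ 2) := by
    intro t
    congr 1
    rw [hb]
    field_simp
  have h2b : 1 / (2 * b) = σ2 := by
    rw [hb]
    field_simp
  have hc2 : c * Real.sqrt (π / b) = 2 := by
    rw [hc, ← Real.sqrt_mul (by positivity)]
    have h4 : 2 / (π * σ2) * (π / b) = 4 := by
      rw [hb]; field_simp; ring
    rw [h4, show (4:ℝ) = 2 ^ 2 by norm_num, Real.sqrt_sq (by norm_num)]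
  -- first part
  have hpart1 : ∫ ω, (X ω) ^ 2 ∂P = σ2 := by
    have h := hn_cov P σ2 X hX_meas hX_law (fun t => t ^ 2) (by fun_prop)
    rw [h]
    have heq : ∀ t : ℝ, (c * Real.exp (-t ^ 2 / (2 * σ2))) * t ^ 2
        = c * (t ^ 2 * Real.exp (-b * t ^ 2)) := by
      intro t; rw [hexp_eq t]; ring
    simp only [← hc, heq]
    rw [integral_const_mul, hn_gauss_sq hbpos, integral_gaussian_Ioi b, h2b]
    have : c * (σ2 * (Real.sqrt (π / b) / 2)) = σ2 * ((c * Real.sqrt (π / b)) / 2) := by ring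
    rw [this, hc2]
    ring
  refine ⟨hpart1, ?_⟩
  rintro f ⟨K, hf⟩
  rw [hpart1]
  have hd := hn_cov P σ2 X hX_meas hX_law (deriv f) (measurable_deriv f)
  have hx := hn_cov P σ2 X hX_meas hX_law (fun t => t * (f t - f 0))
    (measurable_id.mul ((hf.continuous.measurable).sub measurable_const))
  rw [hd, hx]
  have heq1 : ∀ t : ℝ, (c * Real.exp (-t ^ 2 / (2 * σ2))) * deriv f t
      = c * (Real.exp (-b * t ^ 2) * deriv f t) := by
    intro t; rw [hexp_eq t]; ring
  have heq2 : ∀ t : ℝ, (c * Real.exp (-t ^ 2 / (2 * σ2))) * (t * (f t - f 0))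
      = c * ((t * Real.exp (-b * t ^ 2)) * (f t - f 0)) := by
    intro t; rw [hexp_eq t]; ring
  simp only [← hc, heq1, heq2]
  rw [integral_const_mul, integral_const_mul, hn_fubini_part hbpos hf]
  have heq3 : ∀ s : ℝ, (Real.exp (-b * s ^ 2) / (2 * b)) * deriv f s
      = σ2 * (Real.exp (-b * s ^ 2) * deriv f s) := by
    intro s
    rw [← h2b]; ring
  simp only [heq3]
  rw [integral_const_mul]
  ring
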